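/- Let φ1, φ2, X1, X2 be positive reals and β ∈ (0,1]. If φ2·X1 < φ1·X2, φ2 > φ1·X1·X2, and β > min( √(4·φ2·X1/(φ1·X2^3)) − X1/X2 , √(4·φ2·X1/(φ1·X2)) + X1/X2 ), then G = (φ1, φ2, X1, X2) does not belong to G†(β). (Thus every game admitting a mutually beneficial transfer admits a nonzero alliance optimal transfer.) -/

import Mathlib

noncomputable section

/-- Case 4 of the adversary's allocation: `φ2·X1 = φ1·X2` and `X1 + X2 ≥ 1`. -/
def InCase4 (φ1 φ2 X1 X2 : ℝ) : Prop := φ2 * X1 = φ1 * X2 ∧ 1 ≤ X1 + X2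

/-- Case 1: not Case 4, and `φ2 ≤ φ1·X1·X2`. -/
def InCase1 (φ1 φ2 X1 X2 : ℝ) : Prop :=
  ¬ InCase4 φ1 φ2 X1 X2 ∧ φ2 ≤ φ1 * X1 * X2

/-- Case 2: not Case 4 nor Case 1, and `1 - √(φ1·X1·X2/φ2) ≤ X2`. -/
def InCase2 (φ1 φ2 X1 X2 : ℝ) : Prop :=
  ¬ InCase4 φ1 φ2 X1 X2 ∧ ¬ (φ2 ≤ φ1 * X1 * X2) ∧
    1 - Real.sqrt (φ1 * X1 * X2 / φ2) ≤ X2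

/-- Case 3: not Case 4, 1, nor 2. -/
def InCase3 (φ1 φ2 X1 X2 : ℝ) : Prop :=
  ¬ InCase4 φ1 φ2 X1 X2 ∧ ¬ (φ2 ≤ φ1 * X1 * X2) ∧
    ¬ (1 - Real.sqrt (φ1 * X1 * X2 / φ2) ≤ X2)

/-- Membership in the set `G†(β)` of games whose alliance optimal transfer is zero. -/
def GDagger (φ1 φ2 X1 X2 β : ℝ) : Prop :=
  (InCase2 φ1 φ2 X1 X2 ∧ X1 + β * X2 ≤ Real.sqrt (φ2 * X1 / (φ1 * X2))) ∨
  InCase4 φ1 φ2 X1 X2 ∨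
  (InCase3 φ1 φ2 X1 X2 ∧
    β * φ1 - φ2 ≤ Real.sqrt (φ1 * φ2 / (X1 * X2)) * (X1 - β * X2))

/-- Every game admitting a mutually beneficial transfer (per the conditions of
Theorem 1) lies outside `G†(β)`, hence admits a nonzero alliance optimal transfer. -/
theorem mutually_beneficial_not_in_GDagger (φ1 φ2 X1 X2 β : ℝ)
    (hφ1 : 0 < φ1) (hφ2 : 0 < φ2) (hX1 : 0 < X1) (hX2 : 0 < X2)
    (hβ0 : 0 < β) (hβ1 : β ≤ 1) (hord : φ2 * X1 < φ1 * X2)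
    (hc1 : φ2 > φ1 * X1 * X2)
    (hc2 : β > min (Real.sqrt (4 * φ2 * X1 / (φ1 * X2 ^ 3)) - X1 / X2)
                   (Real.sqrt (4 * φ2 * X1 / (φ1 * X2)) + X1 / X2)) :
    ¬ GDagger φ1 φ2 X1 X2 β := by
  set R := Real.sqrt (φ2 * X1 / (φ1 * X2)) with hRdef
  set s := Real.sqrt (φ1 * X1 * X2 / φ2) with hsdef
  set C := Real.sqrt (φ1 * φ2 / (X1 * X2)) with hCdef
  have hRpos : 0 < R := Real.sqrt_pos.mpr (by positivity)
  have hspos : 0 < s := Real.sqrt_pos.mpr (by positivity)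
  have hCpos : 0 < C := Real.sqrt_pos.mpr (by positivity)
  have hRs : R * s = X1 := by
    rw [hRdef, hsdef, ← Real.sqrt_mul (by positivity),
      show φ2 * X1 / (φ1 * X2) * (φ1 * X1 * X2 / φ2) = X1 ^ 2 by field_simp]
    exact Real.sqrt_sq hX1.le
  have hs1 : s < 1 := by
    rw [hsdef, show (1 : ℝ) = Real.sqrt 1 by simp]
    apply Real.sqrt_lt_sqrt (by positivity)
    rw [div_lt_one hφ2]; linarith
  have hA : Real.sqrt (4 * φ2 * X1 / (φ1 * X2 ^ 3)) = 2 * R / X2 := by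
    rw [show 4 * φ2 * X1 / (φ1 * X2 ^ 3) = (2 / X2) ^ 2 * (φ2 * X1 / (φ1 * X2)) by
      field_simp; ring]
    rw [Real.sqrt_mul (by positivity), Real.sqrt_sq (by positivity), hRdef]
    ring
  have hB : Real.sqrt (4 * φ2 * X1 / (φ1 * X2)) = 2 * R := by
    rw [show 4 * φ2 * X1 / (φ1 * X2) = 2 ^ 2 * (φ2 * X1 / (φ1 * X2)) by ring]
    rw [Real.sqrt_mul (by positivity), Real.sqrt_sq (by positivity), hRdef]
  have hRC : R * C * X2 = φ2 := by
    rw [hRdef, hCdef, ← Real.sqrt_mul (by positivity),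
      show φ2 * X1 / (φ1 * X2) * (φ1 * φ2 / (X1 * X2)) = (φ2 / X2) ^ 2 by
        field_simp]
    rw [Real.sqrt_sq (by positivity)]
    field_simp
  have hRφ : R * φ1 = C * X1 := by
    rw [hRdef, hCdef]
    rw [show φ1 = Real.sqrt (φ1 ^ 2) by rw [Real.sqrt_sq hφ1.le],
      show X1 = Real.sqrt (X1 ^ 2) by rw [Real.sqrt_sq hX1.le],
      ← Real.sqrt_mul (by positivity), ← Real.sqrt_mul (by positivity)]
    congr 1
    field_simp; ring
    rw [Real.sq_sqrt (by positivity), Real.sq_sqrt (by positivity)]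
  rintro (⟨h2, hineq⟩ | h4 | ⟨h3, hineq⟩)
  · -- Case 2
    rw [← hRdef] at hineq
    have hsum : 1 - s ≤ X2 := h2.2.2
    rcases min_lt_iff.mp hc2 with hA' | hB'
    · rw [hA] at hA'
      have h := mul_lt_mul_of_pos_right hA' hX2
      rw [sub_mul, div_mul_cancel₀ _ (ne_of_gt hX2), div_mul_cancel₀ _ (ne_of_gt hX2)] at h
      linarith
    · rw [hB] at hB'
      have h := mul_lt_mul_of_pos_right hB' hX2
      rw [add_mul, div_mul_cancel₀ _ (ne_of_gt hX2)] at h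
      have h2' : 0 ≤ R * (s + X2 - 1) := mul_nonneg hRpos.le (by linarith)
      nlinarith [hRs]
  · -- Case 4
    exact absurd h4.1 (ne_of_lt hord)
  · -- Case 3
    rw [← hCdef] at hineq
    have hsum : X2 < 1 - s := by
      have := h3.2.2; push_neg at this; linarith
    have hβR : R < β := by
      rcases min_lt_iff.mp hc2 with hA' | hB'
      · rw [hA] at hA'
        have h := mul_lt_mul_of_pos_right hA' hX2
        rw [sub_mul, div_mul_cancel₀ _ (ne_of_gt hX2), div_mul_cancel₀ _ (ne_of_gt hX2)] at h
        have h2 := mul_lt_mul_of_pos_left hsum hRpos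
        have h1 : R * X2 < β * X2 := by nlinarith [hRs]
        exact lt_of_mul_lt_mul_right h1 hX2.le
      · rw [hB] at hB'
        have : 0 < X1 / X2 := by positivity
        linarith
    have hpos : 0 < φ1 + C * X2 := by positivity
    nlinarith [mul_pos (sub_pos.mpr hβR) hpos, hRC, hRφ, hineq]
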